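/- Let (f, γ₁, γ₂, γ₃) be a transformation datum with f'(p) ≠ 0 and A(p) ≠ 0, and let (Ḡ, Γ̄, p̄, ξ̄) := (exp(2·γ₁(p))•G, Γ̄, f(p), f'(p)•ξ) with Γ̄(u, v) := Γ(u, v) + γ₂'(p)·(ξ(u)·v + ξ(v)·u) − γ₃'(p)·(G u v)·(G.symm ξ) be the transformed pointwise data, and let Ā, C̄₁, C̄₂ be the transformed coefficients. Then the invariant connection is unchanged: Γ̂[Ḡ, Γ̄, p̄, ξ̄; Ā, C̄₁, C̄₂] = Γ̂[G, Γ, p, ξ; A, C₁, C₂] as bilinear maps V × V → V. That is, the connection Γ̂ of eq. (con), obtained by subtracting from Γ its C₁- and C₂-dependent part, is invariant under the conformal–almost-geodesic frame transformations. -/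
import Mathlib


/-- Transformation rule (t1) for the non-minimal coupling coefficient `A`:
`Ā(f x) = exp(−(n−2)·γ₁ x)·A x`. -/
noncomputable def transA (n : ℕ) (f : ℝ ≃ ℝ) (γ₁ A : ℝ → ℝ) : ℝ → ℝ :=
  fun y => Real.exp (-((n : ℝ) - 2) * γ₁ (f.symm y)) * A (f.symm y)

/-- Transformation rule (t3) for the coefficient `C₁`:
`C̄₁(f x)·f' x = exp(−(n−2)·γ₁ x)·(C₁ x + A x·((n−1)/2·γ₂' x + (n−3)/2·γ₃' x))`. -/
noncomputable def transC1 (n : ℕ) (f : ℝ ≃ ℝ) (γ₁ γ₂ γ₃ A C₁ : ℝ → ℝ) : ℝ → ℝ :=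
  fun y => Real.exp (-((n : ℝ) - 2) * γ₁ (f.symm y)) *
    (C₁ (f.symm y) + A (f.symm y) *
      (((n : ℝ) - 1) / 2 * deriv γ₂ (f.symm y) + ((n : ℝ) - 3) / 2 * deriv γ₃ (f.symm y)))
    / deriv (⇑f) (f.symm y)

/-- Transformation rule (t4) for the coefficient `C₂`:
`C̄₂(f x)·f' x = exp(−(n−2)·γ₁ x)·(C₂ x + A x·((n−1)·γ₂' x − γ₃' x))`. -/
noncomputable def transC2 (n : ℕ) (f : ℝ ≃ ℝ) (γ₁ γ₂ γ₃ A C₂ : ℝ → ℝ) : ℝ → ℝ :=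
  fun y => Real.exp (-((n : ℝ) - 2) * γ₁ (f.symm y)) *
    (C₂ (f.symm y) + A (f.symm y) *
      (((n : ℝ) - 1) * deriv γ₂ (f.symm y) - deriv γ₃ (f.symm y)))
    / deriv (⇑f) (f.symm y)

/-- The invariant connection `Γ̂` of eq. (con), evaluated pointwise on data
`(G, Γ, p, ξ)` with coefficients `(A, C₁, C₂)`:
`Γ̂(u,v) = Γ(u,v) − P₁(p)·(ξ(u)·v + ξ(v)·u) − P₂(p)·(G u v)·(G⁻¹ ξ)`, where
`P₁ = (2·C₁ + (n−3)·C₂)/((n−1)·(n−2)·A)` and `P₂ = (C₂ − 2·C₁)/((n−2)·A)`. -/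
noncomputable def invariantConnection {V : Type*} [AddCommGroup V] [Module ℝ V]
    (n : ℕ) (G : V ≃ₗ[ℝ] Module.Dual ℝ V) (Γ : V → V → V) (p : ℝ)
    (ξ : Module.Dual ℝ V) (A C₁ C₂ : ℝ → ℝ) (u v : V) : V :=
  Γ u v
    - ((2 * C₁ p + ((n : ℝ) - 3) * C₂ p) / (((n : ℝ) - 1) * ((n : ℝ) - 2) * A p))
        • (ξ u • v + ξ v • u)
    - ((C₂ p - 2 * C₁ p) / (((n : ℝ) - 2) * A p)) • ((G u v) • G.symm ξ)

/-- The invariant connection `Γ̂` of eq. (con) is unchanged under the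
conformal–almost-geodesic frame transformations: computing `Γ̂` from the
transformed pointwise data `(exp(2γ₁(p))•G, Γ̄, f(p), f'(p)•ξ)` (with
`Γ̄(u,v) = Γ(u,v) + γ₂'(p)(ξ(u)v + ξ(v)u) − γ₃'(p)(G u v)(G⁻¹ξ)`) and the
transformed coefficients `(Ā, C̄₁, C̄₂)` gives the same bilinear map
`V × V → V` as computing it from the original data and coefficients. -/
theorem invariantConnection_invariant (n : ℕ) (hn : 3 ≤ n)
    {V : Type*} [AddCommGroup V] [Module ℝ V]
    (G : V ≃ₗ[ℝ] Module.Dual ℝ V) (Γ : V → V → V) (p : ℝ) (ξ : Module.Dual ℝ V)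
    (f : ℝ ≃ ℝ) (γ₁ γ₂ γ₃ : ℝ → ℝ)
    (hf : Differentiable ℝ ⇑f) (hγ₁ : Differentiable ℝ γ₁)
    (hγ₂ : Differentiable ℝ γ₂) (hγ₃ : Differentiable ℝ γ₃)
    (hf' : deriv (⇑f) p ≠ 0)
    (A C₁ C₂ : ℝ → ℝ) (hA : A p ≠ 0) :
    ∀ u v,
      invariantConnection n
        (G.trans (LinearEquiv.smulOfNeZero ℝ (Module.Dual ℝ V)
          (Real.exp (2 * γ₁ p)) (Real.exp_ne_zero _)))
        (fun u v => Γ u v + deriv γ₂ p • (ξ u • v + ξ v • u)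
          - deriv γ₃ p • ((G u v) • G.symm ξ))
        (f p) (deriv (⇑f) p • ξ)
        (transA n f γ₁ A) (transC1 n f γ₁ γ₂ γ₃ A C₁) (transC2 n f γ₁ γ₂ γ₃ A C₂) u v
      = invariantConnection n G Γ p ξ A C₁ C₂ u v := by
  intro u v
  have h3 : (3:ℝ) ≤ (n:ℝ) := by exact_mod_cast hn
  have hn2 : ((n:ℝ) - 2) ≠ 0 := by linarith
  have hn1 : ((n:ℝ) - 1) ≠ 0 := by linarith
  have he1 : Real.exp (-((n:ℝ) - 2) * γ₁ p) ≠ 0 := Real.exp_ne_zero _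
  have he2 : Real.exp (2 * γ₁ p) ≠ 0 := Real.exp_ne_zero _
  simp only [invariantConnection, transA, transC1, transC2, Equiv.symm_apply_apply,
    LinearEquiv.trans_apply, LinearEquiv.symm_trans_apply,
    LinearEquiv.smulOfNeZero_apply, LinearEquiv.smulOfNeZero_symm_apply,
    Units.smul_def, Units.val_inv_eq_inv_val, Units.val_mk0,
    map_smul, LinearMap.smul_apply, smul_eq_mul]
  match_scalars <;> field_simp <;> ring
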